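/- arXiv:2408.00724 — 2 statements merged into one kernel-verified Lean document; each statement's English description precedes it below -/
import Mathlib

section
/- Let $A$ be a finite set and $p$ a distribution on $A$ with two distinct elements $y_1 \ne y_2$ satisfying $p(y_1) = p(y_2) = \max_y p(y)$. Let $X_1,\dots,X_n$ be i.i.d. with law $p$ and $f_n$ the empirical counts. Then $\liminf_n \mathbb{P}(f_n(y_1) > f_n(y_2)) > 0$ and $\liminf_n \mathbb{P}(f_n(y_2) > f_n(y_1)) > 0$; hence the majority-vote outcome does not converge almost surely. -/
open MeasureTheory ProbabilityTheory Filter Finset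

theorem stmt_9 {A : Type*} [Fintype A] [DecidableEq A]
    [MeasurableSpace A] [MeasurableSingletonClass A]
    {Ω : Type*} [MeasurableSpace Ω] (μ : Measure Ω) [IsProbabilityMeasure μ]
    (p : PMF A) (y1 y2 : A) (h12 : y1 ≠ y2) (heq : p y1 = p y2)
    (hmax : ∀ y, p y ≤ p y1)
    (X : ℕ → Ω → A) (hX : ∀ i, Measurable (X i))
    (hindep : iIndepFun X μ)
    (hlaw : ∀ i, Measure.map (X i) μ = p.toMeasure) :
    0 < Filter.liminf (fun n => (μ {ω |
        ((Finset.range n).filter (fun i => X i ω = y2)).card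
          < ((Finset.range n).filter (fun i => X i ω = y1)).card}).toReal) Filter.atTop
    ∧ 0 < Filter.liminf (fun n => (μ {ω |
        ((Finset.range n).filter (fun i => X i ω = y1)).card
          < ((Finset.range n).filter (fun i => X i ω = y2)).card}).toReal) Filter.atTop := by
  classical
  set g : A → ℤ := fun x => (if x = y1 then (1:ℤ) else 0) - (if x = y2 then 1 else 0)
    with hgdef
  have hgm : Measurable g := measurable_of_countable g
  set Y : ℕ → Ω → ℤ := fun i => g ∘ X i with hYdef
  have hYm : ∀ i, Measurable (Y i) := fun i => hgm.comp (hX i)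
  have hYindep : iIndepFun Y μ :=
    hindep.comp (fun _ => g) (fun _ => hgm)
  set D : ℕ → Ω → ℤ := fun n => ∑ i ∈ Finset.range n, Y i with hDdef
  have hDapp : ∀ n ω, D n ω = ∑ i ∈ Finset.range n, Y i ω := by
    intro n ω; simp [hDdef]
  have hDm : ∀ n, Measurable (D n) := by
    intro n
    have : D n = fun ω => ∑ i ∈ Finset.range n, Y i ω := funext (hDapp n)
    rw [this]
    exact Finset.measurable_sum _ fun i _ => hYm i
  have hgval : ∀ x, g x = 1 ∨ g x = 0 ∨ g x = -1 := by
    intro x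
    by_cases h1 : x = y1 <;> by_cases h2 : x = y2 <;> simp [hgdef, h1, h2, h12, Ne.symm h12]
  -- law of Y i
  have hYpre : ∀ i (s : Set ℤ), MeasurableSet s → μ (Y i ⁻¹' s) = p.toMeasure (g ⁻¹' s) := by
    intro i s hs
    have h1 : Y i ⁻¹' s = X i ⁻¹' (g ⁻¹' s) := rfl
    rw [h1, ← Measure.map_apply (hX i) (hgm hs), hlaw i]
  have hpre1 : g ⁻¹' ({1} : Set ℤ) = {y1} := by
    ext x
    by_cases h1 : x = y1
    · subst h1; simp [hgdef, h12]
    · by_cases h2 : x = y2 <;> simp [hgdef, h1, h2, h12, Ne.symm h12]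
  have hpreneg1 : g ⁻¹' ({-1} : Set ℤ) = {y2} := by
    ext x
    by_cases h1 : x = y1
    · subst h1; simp [hgdef, h12, Ne.symm h12]
    · by_cases h2 : x = y2 <;> simp [hgdef, h1, h2, h12, Ne.symm h12]
  have hpre0 : g ⁻¹' ({0} : Set ℤ) = ({y1} ∪ {y2} : Set A)ᶜ := by
    ext x
    by_cases h1 : x = y1
    · subst h1; simp [hgdef, h12]
    · by_cases h2 : x = y2 <;> simp [hgdef, h1, h2, h12, Ne.symm h12]
  have hq1 : ∀ i, μ (Y i ⁻¹' {1}) = p y1 := by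
    intro i
    rw [hYpre i _ (measurableSet_singleton _), hpre1,
      PMF.toMeasure_apply_singleton _ _ (measurableSet_singleton _)]
  have hqneg1 : ∀ i, μ (Y i ⁻¹' {-1}) = p y1 := by
    intro i
    rw [hYpre i _ (measurableSet_singleton _), hpreneg1,
      PMF.toMeasure_apply_singleton _ _ (measurableSet_singleton _), heq]
  have hsum2 : p.toMeasure ({y1} ∪ {y2} : Set A) = p y1 + p y1 := by
    rw [measure_union (by simpa using h12) (measurableSet_singleton _),
      PMF.toMeasure_apply_singleton _ _ (measurableSet_singleton _),
      PMF.toMeasure_apply_singleton _ _ (measurableSet_singleton _), heq]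
  have hq0 : ∀ i, μ (Y i ⁻¹' {0}) = 1 - (p y1 + p y1) := by
    intro i
    rw [hYpre i _ (measurableSet_singleton _), hpre0,
      measure_compl ((measurableSet_singleton _).union (measurableSet_singleton _))
        (measure_ne_top _ _), measure_univ, hsum2]
  have hqother : ∀ i (j : ℤ), j ≠ 1 → j ≠ 0 → j ≠ -1 → μ (Y i ⁻¹' {j}) = 0 := by
    intro i j hj1 hj0 hjn
    have : Y i ⁻¹' {j} = ∅ := by
      ext ω
      simp only [Set.mem_preimage, Set.mem_singleton_iff, Set.mem_empty_iff_false, iff_false]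
      intro h
      rcases hgval (X i ω) with h'|h'|h' <;>
        · rw [show Y i ω = g (X i ω) from rfl, h'] at h; omega
    rw [this, measure_empty]
  -- constants
  set c : ENNReal := max (p y1) (1 - (p y1 + p y1)) with hcdef
  have hcle : ∀ i (j : ℤ), μ (Y i ⁻¹' {j}) ≤ c := by
    intro i j
    by_cases hj1 : j = 1
    · subst hj1; rw [hq1]; exact le_max_left _ _
    · by_cases hj0 : j = 0
      · subst hj0; rw [hq0]; exact le_max_right _ _
      · by_cases hjn : j = -1
        · subst hjn; rw [hqneg1]; exact le_max_left _ _
        · rw [hqother i j hj1 hj0 hjn]; exact zero_le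
  have hqsymm : ∀ i (j : ℤ), μ (Y i ⁻¹' {j}) = μ (Y i ⁻¹' {-j}) := by
    intro i j
    by_cases hj1 : j = 1
    · subst hj1; rw [hq1, hqneg1]
    · by_cases hj0 : j = 0
      · subst hj0; norm_num
      · by_cases hjn : j = -1
        · subst hjn; norm_num [hq1, hqneg1]
        · rw [hqother i j hj1 hj0 hjn, hqother i (-j) (by omega) (by omega) (by omega)]
  have ha0 : p y1 ≠ 0 := by
    intro h
    have hz : ∀ y, p y = 0 := fun y => le_antisymm (h ▸ hmax y) zero_le
    have h1 : ∑' y, p y = 1 := p.tsum_coe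
    rw [tsum_congr hz] at h1
    simp at h1
  have h2a : p y1 + p y1 ≤ 1 := by
    calc p y1 + p y1 = p.toMeasure ({y1} ∪ {y2} : Set A) := hsum2.symm
    _ ≤ 1 := prob_le_one
  have hc_lt1 : c < 1 := by
    apply max_lt
    · refine lt_of_le_of_ne (p.coe_le_one y1) ?_
      intro h
      rw [h] at h2a
      exact absurd h2a (by norm_num)
    · exact ENNReal.sub_lt_self ENNReal.one_ne_top one_ne_zero (by simpa using ha0)
  have hc_top : c ≠ ⊤ := ne_top_of_lt hc_lt1
  -- independence of partial sum and next step
  have hInd : ∀ n, IndepFun (D n) (Y n) μ :=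
    fun n => hYindep.indepFun_sum_range_succ hYm n
  -- decomposition
  have hdecomp : ∀ n (k : ℤ), μ (D (n+1) ⁻¹' {k})
      = ∑ j ∈ ({-1, 0, 1} : Finset ℤ), μ (D n ⁻¹' {k - j}) * μ (Y n ⁻¹' {j}) := by
    intro n k
    have hsplit : D (n+1) ⁻¹' {k}
        = ⋃ j ∈ ({-1, 0, 1} : Finset ℤ), (D n ⁻¹' {k - j} ∩ Y n ⁻¹' {j}) := by
      ext ω
      have hsum : D (n+1) ω = D n ω + Y n ω := by
        rw [hDapp, hDapp, Finset.sum_range_succ]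
      simp only [Set.mem_preimage, Set.mem_singleton_iff, Set.mem_iUnion,
        Set.mem_inter_iff, Finset.mem_insert, Finset.mem_singleton, exists_prop]
      constructor
      · intro h
        refine ⟨Y n ω, ?_, by omega, rfl⟩
        rcases hgval (X n ω) with h'|h'|h' <;>
          · rw [show Y n ω = g (X n ω) from rfl, h']; tauto
      · rintro ⟨j, _, h1, h2⟩; omega
    rw [hsplit, measure_biUnion_finset ?_ ?_]
    · exact Finset.sum_congr rfl fun j _ =>
        (hInd n).measure_inter_preimage_eq_mul {k - j} {j} (measurableSet_singleton _)
          (measurableSet_singleton _)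
    · intro j _ j' _ hne
      rw [Function.onFun, Set.disjoint_left]
      rintro ω ⟨_, h2⟩ ⟨_, h2'⟩
      rw [Set.mem_preimage, Set.mem_singleton_iff] at h2 h2'
      exact hne (h2 ▸ h2')
    · exact fun j _ => ((hDm n) (measurableSet_singleton _)).inter
        ((hYm n) (measurableSet_singleton _))
  -- anti-concentration bound
  have hbound : ∀ n (k : ℤ), μ (D (n+1) ⁻¹' {k}) ≤ c := by
    intro n k
    rw [hdecomp]
    have hdisj : (↑({-1, 0, 1} : Finset ℤ) : Set ℤ).PairwiseDisjoint
        (fun j => D n ⁻¹' {k - j}) := by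
      intro j _ j' _ hne
      rw [Function.onFun, Set.disjoint_left]
      rintro ω h2 h2'
      rw [Set.mem_preimage, Set.mem_singleton_iff] at h2 h2'
      exact hne (by omega)
    calc ∑ j ∈ ({-1, 0, 1} : Finset ℤ), μ (D n ⁻¹' {k - j}) * μ (Y n ⁻¹' {j})
        ≤ ∑ j ∈ ({-1, 0, 1} : Finset ℤ), μ (D n ⁻¹' {k - j}) * c :=
          Finset.sum_le_sum fun j _ => mul_le_mul_right (hcle n j) _
      _ = (∑ j ∈ ({-1, 0, 1} : Finset ℤ), μ (D n ⁻¹' {k - j})) * c :=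
          (Finset.sum_mul _ _ _).symm
      _ ≤ 1 * c := by
          refine mul_le_mul_left ?_ c
          rw [← measure_biUnion_finset hdisj
            (fun j _ => (hDm n) (measurableSet_singleton _))]
          exact prob_le_one
      _ = c := one_mul c
  -- symmetry of the law of D n
  have hexp : ∀ (f : ℤ → ENNReal),
      ∑ j ∈ ({-1, 0, 1} : Finset ℤ), f j = f (-1) + f 0 + f 1 := by
    intro f
    rw [show ({-1, 0, 1} : Finset ℤ) = insert (-1) (insert 0 {1}) from rfl,
      Finset.sum_insert (by decide), Finset.sum_insert (by decide),
      Finset.sum_singleton, add_assoc]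
  have hsymm : ∀ n (k : ℤ), μ (D n ⁻¹' {k}) = μ (D n ⁻¹' {-k}) := by
    intro n
    induction n with
    | zero =>
      intro k
      by_cases hk : k = 0
      · subst hk; norm_num
      · have h0 : ∀ (m : ℤ), m ≠ 0 → D 0 ⁻¹' {m} = ∅ := by
          intro m hm
          ext ω
          simp only [Set.mem_preimage, Set.mem_singleton_iff, Set.mem_empty_iff_false,
            iff_false]
          rw [hDapp]; simpa using fun h => hm h.symm
        rw [h0 k hk, h0 (-k) (by omega)]
    | succ n ih =>
      intro k
      rw [hdecomp, hdecomp, hexp, hexp]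
      have e1 : μ (D n ⁻¹' {k - -1}) = μ (D n ⁻¹' {-k - 1}) := by
        rw [show (k - -1 : ℤ) = k + 1 by ring, ih (k+1),
          show (-(k+1) : ℤ) = -k - 1 by ring]
      have e2 : μ (D n ⁻¹' {k - 0}) = μ (D n ⁻¹' {-k - 0}) := by
        simp only [sub_zero]; exact ih k
      have e3 : μ (D n ⁻¹' {k - 1}) = μ (D n ⁻¹' {-k - -1}) := by
        rw [ih (k-1), show (-(k-1) : ℤ) = -k - -1 by ring]
      have eq : μ (Y n ⁻¹' {-1}) = μ (Y n ⁻¹' {1}) := by rw [hqneg1, hq1]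
      rw [e1, e2, e3, eq]
      ring
  -- range of D n
  have habs : ∀ (n : ℕ) (ω : Ω), -(n:ℤ) ≤ D n ω ∧ D n ω ≤ n := by
    intro n ω
    have h1 : |D n ω| ≤ n := by
      rw [hDapp]
      calc |∑ i ∈ Finset.range n, Y i ω| ≤ ∑ i ∈ Finset.range n, |Y i ω| :=
            Finset.abs_sum_le_sum_abs _ _
        _ ≤ ∑ _i ∈ Finset.range n, 1 := by
            refine Finset.sum_le_sum fun i _ => ?_
            rcases hgval (X i ω) with h'|h'|h' <;>
              · rw [show Y i ω = g (X i ω) from rfl, h']; norm_num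
        _ = n := by simp
    rw [abs_le] at h1
    exact h1
  -- one-sided probabilities as finite sums
  have hpos_eq : ∀ n, μ {ω | 0 < D n ω}
      = ∑ k ∈ Finset.Icc (1:ℤ) n, μ (D n ⁻¹' {k}) := by
    intro n
    have hset : {ω | 0 < D n ω} = ⋃ k ∈ Finset.Icc (1:ℤ) n, D n ⁻¹' {k} := by
      ext ω
      simp only [Set.mem_setOf_eq, Set.mem_iUnion, Finset.mem_Icc, Set.mem_preimage,
        Set.mem_singleton_iff, exists_prop]
      constructor
      · intro h
        exact ⟨D n ω, ⟨h, (habs n ω).2⟩, rfl⟩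
      · rintro ⟨k, ⟨h1, _⟩, hk⟩; omega
    rw [hset, measure_biUnion_finset ?_ (fun k _ => (hDm n) (measurableSet_singleton _))]
    intro k _ k' _ hne
    rw [Function.onFun, Set.disjoint_left]
    rintro ω h2 h2'
    rw [Set.mem_preimage, Set.mem_singleton_iff] at h2 h2'
    exact hne (h2 ▸ h2')
  have hneg_eq : ∀ n, μ {ω | D n ω < 0}
      = ∑ k ∈ Finset.Icc (1:ℤ) n, μ (D n ⁻¹' {-k}) := by
    intro n
    have hset : {ω | D n ω < 0} = ⋃ k ∈ Finset.Icc (1:ℤ) n, D n ⁻¹' {-k} := by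
      ext ω
      simp only [Set.mem_setOf_eq, Set.mem_iUnion, Finset.mem_Icc, Set.mem_preimage,
        Set.mem_singleton_iff, exists_prop]
      constructor
      · intro h
        exact ⟨-(D n ω), ⟨by omega, by have := (habs n ω).1; omega⟩, by ring⟩
      · rintro ⟨k, ⟨h1, _⟩, hk⟩; omega
    rw [hset, measure_biUnion_finset ?_ (fun k _ => (hDm n) (measurableSet_singleton _))]
    intro k _ k' _ hne
    rw [Function.onFun, Set.disjoint_left]
    rintro ω h2 h2'
    rw [Set.mem_preimage, Set.mem_singleton_iff] at h2 h2'
    exact hne (by omega)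
  have hpm : ∀ n, μ {ω | D n ω < 0} = μ {ω | 0 < D n ω} := by
    intro n
    rw [hpos_eq, hneg_eq]
    exact Finset.sum_congr rfl fun k _ => (hsymm n k).symm
  -- partition into three events
  have hmeasA : ∀ n, MeasurableSet {ω | 0 < D n ω} :=
    fun n => measurableSet_lt measurable_const (hDm n)
  have hmeasC : ∀ n, MeasurableSet {ω | D n ω < 0} :=
    fun n => measurableSet_lt (hDm n) measurable_const
  have hpart : ∀ n, μ {ω | 0 < D n ω} + μ (D n ⁻¹' {0}) + μ {ω | D n ω < 0} = 1 := by
    intro n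
    have hu : ({ω | 0 < D n ω} ∪ D n ⁻¹' {0}) ∪ {ω | D n ω < 0} = Set.univ := by
      ext ω
      simp only [Set.mem_union, Set.mem_setOf_eq, Set.mem_preimage,
        Set.mem_singleton_iff, Set.mem_univ, iff_true]
      omega
    have hd1 : Disjoint {ω | 0 < D n ω} (D n ⁻¹' {0}) := by
      rw [Set.disjoint_left]
      intro ω h1 h2
      rw [Set.mem_preimage, Set.mem_singleton_iff] at h2
      rw [Set.mem_setOf_eq] at h1
      omega
    have hd2 : Disjoint ({ω | 0 < D n ω} ∪ D n ⁻¹' {0}) {ω | D n ω < 0} := by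
      rw [Set.disjoint_left]
      intro ω h1 h2
      rw [Set.mem_setOf_eq] at h2
      rcases h1 with h1 | h1
      · rw [Set.mem_setOf_eq] at h1; omega
      · rw [Set.mem_preimage, Set.mem_singleton_iff] at h1; omega
    rw [← measure_union hd1 ((hDm n) (measurableSet_singleton _)),
      ← measure_union hd2 (hmeasC n), hu, measure_univ]
  -- rewriting the statement's events
  have hDval : ∀ n ω, D n ω
      = (((Finset.range n).filter (fun i => X i ω = y1)).card : ℤ)
        - ((Finset.range n).filter (fun i => X i ω = y2)).card := by
    intro n ω
    rw [hDapp]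
    have : ∀ i, Y i ω = (if X i ω = y1 then (1:ℤ) else 0) - (if X i ω = y2 then 1 else 0) :=
      fun i => rfl
    simp_rw [this]
    rw [Finset.sum_sub_distrib, Finset.sum_boole, Finset.sum_boole]
  have hset1 : ∀ n, {ω | ((Finset.range n).filter (fun i => X i ω = y2)).card
      < ((Finset.range n).filter (fun i => X i ω = y1)).card} = {ω | 0 < D n ω} := by
    intro n
    ext ω
    have := hDval n ω
    simp only [Set.mem_setOf_eq]
    omega
  have hset2 : ∀ n, {ω | ((Finset.range n).filter (fun i => X i ω = y1)).card
      < ((Finset.range n).filter (fun i => X i ω = y2)).card} = {ω | D n ω < 0} := by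
    intro n
    ext ω
    have := hDval n ω
    simp only [Set.mem_setOf_eq]
    omega
  -- real arithmetic
  set c' : ℝ := c.toReal with hc'def
  have hc'1 : c' < 1 := by
    have := (ENNReal.toReal_lt_toReal hc_top ENNReal.one_ne_top).mpr hc_lt1
    simpa using this
  set ε : ℝ := (1 - c') / 2 with hεdef
  have hεpos : 0 < ε := by
    rw [hεdef]; linarith
  have hmain : ∀ n, 1 ≤ n → ε ≤ (μ {ω | 0 < D n ω}).toReal := by
    intro n hn
    obtain ⟨m, rfl⟩ : ∃ m, n = m + 1 := ⟨n - 1, by omega⟩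
    have h0 : μ (D (m+1) ⁻¹' {0}) ≤ c := hbound m 0
    have hQ : (μ (D (m+1) ⁻¹' {0})).toReal ≤ c' :=
      (ENNReal.toReal_le_toReal (measure_ne_top _ _) hc_top).mpr h0
    have hPR : (μ {ω | D (m+1) ω < 0}).toReal = (μ {ω | 0 < D (m+1) ω}).toReal := by
      rw [hpm]
    have hPQR : (μ {ω | 0 < D (m+1) ω}).toReal + (μ (D (m+1) ⁻¹' {0})).toReal
        + (μ {ω | D (m+1) ω < 0}).toReal = 1 := by
      have h := congrArg ENNReal.toReal (hpart (m+1))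
      rwa [ENNReal.toReal_add (by finiteness) (measure_ne_top _ _),
        ENNReal.toReal_add (measure_ne_top _ _) (measure_ne_top _ _),
        ENNReal.toReal_one] at h
    rw [hεdef]
    linarith
  -- conclusion via liminf
  have hbdd : ∀ (u : ℕ → Set Ω), IsCoboundedUnder (· ≥ ·) atTop
      (fun n => (μ (u n)).toReal) := by
    intro u
    refine IsBoundedUnder.isCoboundedUnder_ge ⟨1, ?_⟩
    rw [Filter.eventually_map]
    filter_upwards with n
    have h1 : μ (u n) ≤ 1 := prob_le_one
    simpa using ENNReal.toReal_mono ENNReal.one_ne_top h1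
  constructor
  · refine lt_of_lt_of_le hεpos (le_liminf_of_le (hbdd _) ?_)
    filter_upwards [eventually_ge_atTop 1] with n hn
    rw [hset1 n]
    exact hmain n hn
  · refine lt_of_lt_of_le hεpos (le_liminf_of_le (hbdd _) ?_)
    filter_upwards [eventually_ge_atTop 1] with n hn
    rw [hset2 n, hpm n]
    exact hmain n hn
end

section
/- Let $A$ be a finite set, $p$ a distribution on $A$, and $\rho : A \to (0,\infty)$ a reward function. Suppose the true answer $y_0$ satisfies: $y_0$ is the unique maximizer of $y \mapsto p(y)\rho(y)$ but not a maximizer of $y \mapsto p(y)$. Then the limiting probability of weighted majority voting (with weights $\rho$) outputting $y_0$ equals $1$, while the limiting probability of unweighted majority voting outputting $y_0$ equals $0$. -/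
open MeasureTheory ProbabilityTheory Filter Finset Topology ENNReal

private lemma slln_aux {A : Type*} [Fintype A] [DecidableEq A] [MeasurableSpace A]
    [MeasurableSingletonClass A] {Ω : Type*} [MeasurableSpace Ω] (μ : Measure Ω)
    [IsProbabilityMeasure μ] (p : PMF A) (X : ℕ → Ω → A) (hX : ∀ i, Measurable (X i))
    (hindep : iIndepFun X μ)
    (hlaw : ∀ i, Measure.map (X i) μ = p.toMeasure) (g : A → ℝ) :
    ∀ᵐ ω ∂μ, Tendsto (fun n : ℕ => (∑ i ∈ Finset.range n, g (X i ω)) / n) atTop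
      (𝓝 (∑ a, (p a).toReal * g a)) := by
  have hg : Measurable g := measurable_of_countable g
  have hid : ∀ i, IdentDistrib (fun ω => g (X i ω)) (fun ω => g (X 0 ω)) μ μ := fun i =>
    IdentDistrib.comp ⟨(hX i).aemeasurable, (hX 0).aemeasurable, by rw [hlaw i, hlaw 0]⟩ hg
  have hgp : Integrable g (Measure.map (X 0) μ) := by rw [hlaw 0]; exact .of_finite
  have hint : Integrable (fun ω => g (X 0 ω)) μ :=
    (integrable_map_measure hgp.aestronglyMeasurable (hX 0).aemeasurable).mp hgp
  have hpair : Pairwise (Function.onFun (IndepFun · · μ) fun i ω => g (X i ω)) := fun i j hij =>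
    (hindep.indepFun hij).comp hg hg
  have hI : (μ[fun ω => g (X 0 ω)]) = ∑ a, (p a).toReal * g a := by
    rw [← integral_map (hX 0).aemeasurable hg.aestronglyMeasurable, hlaw 0,
      PMF.integral_eq_sum]
    simp [smul_eq_mul]
  have h := strong_law_ae_real (fun i ω => g (X i ω)) hint hpair hid
  rw [hI] at h
  exact h

theorem stmt_14 {A : Type*} [Fintype A] [Nonempty A] [DecidableEq A]
    [MeasurableSpace A] [MeasurableSingletonClass A]
    {Ω : Type*} [MeasurableSpace Ω] (μ : Measure Ω) [IsProbabilityMeasure μ]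
    (p : PMF A) (ρ : A → ℝ) (hρ : ∀ y, 0 < ρ y) (y0 : A)
    (hwmax : ∀ y, y ≠ y0 → (p y).toReal * ρ y < (p y0).toReal * ρ y0)
    (hnotmax : ∃ y, p y0 < p y)
    (X : ℕ → Ω → A) (hX : ∀ i, Measurable (X i))
    (hindep : iIndepFun X μ)
    (hlaw : ∀ i, Measure.map (X i) μ = p.toMeasure) :
    Tendsto (fun n => (μ {ω | ∀ y, y ≠ y0 →
        (∑ i ∈ Finset.range n, if X i ω = y then ρ (X i ω) else 0)
          < ∑ i ∈ Finset.range n, if X i ω = y0 then ρ (X i ω) else 0}).toReal)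
      atTop (nhds 1)
    ∧ Tendsto (fun n => (μ {ω | ∀ y,
        ((Finset.range n).filter (fun i => X i ω = y)).card
          ≤ ((Finset.range n).filter (fun i => X i ω = y0)).card}).toReal)
      atTop (nhds 0) := by
  classical
  -- weight functions
  set gw : A → A → ℝ := fun y a => if a = y then ρ a else 0 with hgw
  set gc : A → A → ℝ := fun y a => if a = y then 1 else 0 with hgc
  have hgwlim : ∀ y : A, (∑ a, (p a).toReal * gw y a) = (p y).toReal * ρ y := by
    intro y
    rw [Finset.sum_eq_single y]
    · simp [gw]
    · intro b _ hb; simp [gw, hb]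
    · simp
  have hgclim : ∀ y : A, (∑ a, (p a).toReal * gc y a) = (p y).toReal := by
    intro y
    rw [Finset.sum_eq_single y]
    · simp [gc]
    · intro b _ hb; simp [gc, hb]
    · simp
  -- a.e. convergence for all weight functions simultaneously
  have hae : ∀ᵐ ω ∂μ, (∀ y : A,
      Tendsto (fun n : ℕ => (∑ i ∈ Finset.range n, gw y (X i ω)) / n) atTop
        (𝓝 ((p y).toReal * ρ y))) ∧ (∀ y : A,
      Tendsto (fun n : ℕ => (∑ i ∈ Finset.range n, gc y (X i ω)) / n) atTop
        (𝓝 ((p y).toReal))) := by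
    rw [eventually_and]
    constructor <;> rw [ae_all_iff] <;> intro y
    · have := slln_aux μ p X hX hindep hlaw (gw y)
      rw [hgwlim y] at this; exact this
    · have := slln_aux μ p X hX hindep hlaw (gc y)
      rw [hgclim y] at this; exact this
  obtain ⟨y1, hy1⟩ := hnotmax
  have hy1' : (p y0).toReal < (p y1).toReal :=
    ENNReal.toReal_lt_toReal (p.apply_ne_top y0) (p.apply_ne_top y1) |>.mpr hy1
  -- measurability of the sums
  have hSw : ∀ (y : A) (n : ℕ), Measurable
      (fun ω => ∑ i ∈ Finset.range n, gw y (X i ω)) := fun y n =>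
    Finset.measurable_sum _ fun i _ => (measurable_of_countable (gw y)).comp (hX i)
  have hEw : ∀ n : ℕ, MeasurableSet {ω | ∀ y, y ≠ y0 →
      (∑ i ∈ Finset.range n, if X i ω = y then ρ (X i ω) else 0)
        < ∑ i ∈ Finset.range n, if X i ω = y0 then ρ (X i ω) else 0} := by
    intro n
    have : {ω | ∀ y, y ≠ y0 →
        (∑ i ∈ Finset.range n, if X i ω = y then ρ (X i ω) else 0)
          < ∑ i ∈ Finset.range n, if X i ω = y0 then ρ (X i ω) else 0}
        = ⋂ y : A, {ω | y ≠ y0 →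
        (∑ i ∈ Finset.range n, gw y (X i ω)) < ∑ i ∈ Finset.range n, gw y0 (X i ω)} := by
      ext ω; simp [gw, Set.mem_iInter]
    rw [this]
    refine MeasurableSet.iInter fun y => ?_
    by_cases hy : y = y0
    · simp [hy]
    · simp only [hy, ne_eq, not_false_eq_true, forall_true_left]
      exact measurableSet_lt (hSw y n) (hSw y0 n)
  have hcard : ∀ (y : A) (n : ℕ) (ω : Ω),
      (((Finset.range n).filter (fun i => X i ω = y)).card : ℝ)
        = ∑ i ∈ Finset.range n, gc y (X i ω) := by
    intro y n ω
    rw [Finset.card_filter]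
    push_cast
    simp [gc]
  have hEc : ∀ n : ℕ, MeasurableSet {ω | ∀ y,
      ((Finset.range n).filter (fun i => X i ω = y)).card
        ≤ ((Finset.range n).filter (fun i => X i ω = y0)).card} := by
    intro n
    have : {ω | ∀ y, ((Finset.range n).filter (fun i => X i ω = y)).card
        ≤ ((Finset.range n).filter (fun i => X i ω = y0)).card}
        = ⋂ y : A, {ω | (∑ i ∈ Finset.range n, gc y (X i ω))
            ≤ ∑ i ∈ Finset.range n, gc y0 (X i ω)} := by
      ext ω
      simp only [Set.mem_setOf_eq, Set.mem_iInter]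
      constructor
      · intro h y; rw [← hcard, ← hcard]; exact_mod_cast h y
      · intro h y; have := h y; rw [← hcard, ← hcard] at this; exact_mod_cast this
    rw [this]
    exact MeasurableSet.iInter fun y =>
      measurableSet_le (Finset.measurable_sum _ fun i _ =>
        (measurable_of_countable (gc y)).comp (hX i))
        (Finset.measurable_sum _ fun i _ => (measurable_of_countable (gc y0)).comp (hX i))
  constructor
  · -- weighted voting: probability → 1
    have h_lim : ∀ᵐ ω ∂μ, ∀ᶠ n : ℕ in atTop, ω ∈ {ω | ∀ y, y ≠ y0 →
        (∑ i ∈ Finset.range n, if X i ω = y then ρ (X i ω) else 0)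
          < ∑ i ∈ Finset.range n, if X i ω = y0 then ρ (X i ω) else 0}
        ↔ ω ∈ (Set.univ : Set Ω) := by
      filter_upwards [hae] with ω hω
      have hω' := hω.1
      have hyall : ∀ᶠ n : ℕ in atTop, ∀ y, y ≠ y0 →
          (∑ i ∈ Finset.range n, gw y (X i ω)) / n
            < (∑ i ∈ Finset.range n, gw y0 (X i ω)) / n := by
        rw [Filter.eventually_all]
        intro y
        by_cases hy : y = y0
        · simp [hy]
        · simp only [hy, ne_eq, not_false_eq_true, forall_true_left]
          exact (hω' y).eventually_lt (hω' y0) (hwmax y hy)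
      filter_upwards [hyall, eventually_gt_atTop 0] with n hn hn0
      simp only [Set.mem_univ, iff_true, Set.mem_setOf_eq]
      intro y hy
      have h1 := hn y hy
      have hnpos : (0 : ℝ) < n := by exact_mod_cast hn0
      have := (div_lt_div_iff_of_pos_right hnpos).mp h1
      simpa [gw] using this
    have := tendsto_measure_of_ae_tendsto_indicator_of_isFiniteMeasure (μ := μ)
      atTop MeasurableSet.univ hEw h_lim
    rw [measure_univ] at this
    have h2 : Tendsto (fun n => (μ {ω | ∀ y, y ≠ y0 →
        (∑ i ∈ Finset.range n, if X i ω = y then ρ (X i ω) else 0)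
          < ∑ i ∈ Finset.range n, if X i ω = y0 then ρ (X i ω) else 0}).toReal)
        atTop (𝓝 (1 : ℝ≥0∞).toReal) :=
      (ENNReal.tendsto_toReal one_ne_top).comp this
    simpa using h2
  · -- unweighted voting: probability → 0
    have h_lim : ∀ᵐ ω ∂μ, ∀ᶠ n : ℕ in atTop, ω ∈ {ω | ∀ y,
        ((Finset.range n).filter (fun i => X i ω = y)).card
          ≤ ((Finset.range n).filter (fun i => X i ω = y0)).card}
        ↔ ω ∈ (∅ : Set Ω) := by
      filter_upwards [hae] with ω hω
      have hω' := hω.2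
      have hev : ∀ᶠ n : ℕ in atTop,
          (∑ i ∈ Finset.range n, gc y0 (X i ω)) / n
            < (∑ i ∈ Finset.range n, gc y1 (X i ω)) / n :=
        (hω' y0).eventually_lt (hω' y1) hy1'
      filter_upwards [hev, eventually_gt_atTop 0] with n hn hn0
      simp only [Set.mem_empty_iff_false, iff_false, Set.mem_setOf_eq, not_forall]
      refine ⟨y1, ?_⟩
      have hnpos : (0 : ℝ) < n := by exact_mod_cast hn0
      have h1 := (div_lt_div_iff_of_pos_right hnpos).mp hn
      rw [← hcard, ← hcard] at h1
      exact_mod_cast not_le.mpr h1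
    have := tendsto_measure_of_ae_tendsto_indicator_of_isFiniteMeasure (μ := μ)
      atTop MeasurableSet.empty hEc h_lim
    rw [measure_empty] at this
    have h2 : Tendsto (fun n => (μ {ω | ∀ y,
        ((Finset.range n).filter (fun i => X i ω = y)).card
          ≤ ((Finset.range n).filter (fun i => X i ω = y0)).card}).toReal)
        atTop (𝓝 (0 : ℝ≥0∞).toReal) :=
      (ENNReal.tendsto_toReal zero_ne_top).comp this
    simpa using h2
end
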